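/- For every integer ℓ ≥ 1 and every real number z ≤ 0, one has 0 < φ_ℓ(2z) and φ_ℓ(2z) ≤ φ_ℓ(z); in particular 0 ≤ φ_ℓ(2z)/φ_ℓ(z) ≤ 1. -/
import Mathlib

open Finset

/-- For an integer `ℓ ≥ 0` and real `x`, `φ_ℓ(x) := Σ_{k=0}^∞ x^k/(ℓ+k)!` (real valued). -/
noncomputable def phiR (ℓ : ℕ) (x : ℝ) : ℝ := ∑' k : ℕ, x ^ k / ((ℓ + k).factorial : ℝ)

lemma exp_tsum (y : ℝ) : Real.exp y = ∑' n : ℕ, y ^ n / (n.factorial : ℝ) := by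
  rw [Real.exp_eq_exp_ℝ, NormedSpace.exp_eq_tsum_div]

lemma summable_phi_norm (ℓ : ℕ) (x : ℝ) :
    Summable fun k : ℕ => ‖x ^ k / ((ℓ + k).factorial : ℝ)‖ := by
  refine Summable.of_nonneg_of_le (fun k => norm_nonneg _) (fun k => ?_)
    (Real.summable_pow_div_factorial |x|)
  have h1 : ‖x ^ k / ((ℓ + k).factorial : ℝ)‖ = |x| ^ k / ((ℓ + k).factorial : ℝ) := by
    rw [norm_div, norm_pow, Real.norm_eq_abs, Real.norm_eq_abs, Nat.abs_cast]
  rw [h1]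
  have h2 : (k.factorial : ℝ) ≤ ((ℓ + k).factorial : ℝ) := by
    exact_mod_cast Nat.factorial_le (Nat.le_add_left k ℓ)
  exact div_le_div_of_nonneg_left (by positivity) (by positivity) h2

lemma summable_phi (ℓ : ℕ) (x : ℝ) :
    Summable fun k : ℕ => x ^ k / ((ℓ + k).factorial : ℝ) :=
  (summable_phi_norm ℓ x).of_norm

lemma alt_choose (m n : ℕ) :
    ∑ j ∈ range (n + 1), (-1 : ℝ) ^ (n - j) * ((m + 1).choose j : ℝ) = (m.choose n : ℝ) := by
  induction n with
  | zero => simp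
  | succ n ih =>
    rw [Finset.sum_range_succ]
    have h1 : ∑ j ∈ range (n + 1), (-1 : ℝ) ^ (n + 1 - j) * ((m + 1).choose j : ℝ)
        = -∑ j ∈ range (n + 1), (-1 : ℝ) ^ (n - j) * ((m + 1).choose j : ℝ) := by
      rw [← Finset.sum_neg_distrib]
      apply Finset.sum_congr rfl
      intro j hj
      have hj' : j ≤ n := by simpa [Nat.lt_succ_iff] using hj
      have : n + 1 - j = (n - j) + 1 := by omega
      rw [this, pow_succ]
      ring
    rw [h1, ih]
    have pas : ((m + 1).choose (n + 1) : ℝ) = (m.choose n : ℝ) + (m.choose (n + 1) : ℝ) := by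
      exact_mod_cast Nat.choose_succ_succ m n
    simp [pas]

lemma coeff_eq (m n : ℕ) :
    ∑ k ∈ range (n + 1), (-1 : ℝ) ^ k / (((m + 1 + k).factorial : ℝ) * ((n - k).factorial : ℝ))
      = ((m + n).choose n : ℝ) / ((m + n + 1).factorial : ℝ) := by
  have h1 : ∀ k ∈ range (n + 1),
      (-1 : ℝ) ^ k / (((m + 1 + k).factorial : ℝ) * ((n - k).factorial : ℝ))
        = ((-1 : ℝ) ^ k * ((m + n + 1).choose (n - k) : ℝ)) / ((m + n + 1).factorial : ℝ) := by
    intro k hk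
    have hk' : k ≤ n := by simpa [Nat.lt_succ_iff] using hk
    have key := Nat.choose_mul_factorial_mul_factorial (show n - k ≤ m + n + 1 by omega)
    rw [show m + n + 1 - (n - k) = m + 1 + k by omega] at key
    have keyR : ((m + n + 1).choose (n - k) : ℝ) * ((n - k).factorial : ℝ)
        * ((m + 1 + k).factorial : ℝ) = ((m + n + 1).factorial : ℝ) := by
      exact_mod_cast key
    rw [div_eq_div_iff (by positivity) (by positivity), ← keyR]
    ring
  rw [Finset.sum_congr rfl h1, ← Finset.sum_div]
  congr 1
  have h2 := alt_choose (m + n) n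
  rw [← h2, ← Finset.sum_range_reflect (fun j => (-1 : ℝ) ^ (n - j) * (((m + n) + 1).choose j : ℝ))]
  apply Finset.sum_congr rfl
  intro k hk
  have hk' : k ≤ n := by simpa [Nat.lt_succ_iff] using hk
  have e1 : n + 1 - 1 - k = n - k := by omega
  have e2 : n - (n - k) = k := by omega
  simp only [e1, e2]

/-- coefficients of `e^y · φ_ℓ(-y)`. -/
noncomputable def cc (ℓ n : ℕ) : ℝ := ((ℓ + n - 1).choose n : ℝ) / ((ℓ + n).factorial : ℝ)

lemma cc_fact (m n : ℕ) : cc (m + 1) n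
    = ((m + n).factorial : ℝ)
      / ((n.factorial : ℝ) * (m.factorial : ℝ) * ((m + n + 1).factorial : ℝ)) := by
  have key : (m + n).choose n * n.factorial * m.factorial = (m + n).factorial := by
    have := Nat.choose_mul_factorial_mul_factorial (show n ≤ m + n by omega)
    rwa [show m + n - n = m by omega] at this
  have keyR : ((m + n).choose n : ℝ) * (n.factorial : ℝ) * (m.factorial : ℝ)
      = ((m + n).factorial : ℝ) := by exact_mod_cast key
  rw [cc, show m + 1 + n - 1 = m + n by omega, show m + 1 + n = m + n + 1 by omega]
  rw [div_eq_div_iff (by positivity) (by positivity), ← keyR]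
  ring

lemma cc_nonneg (ℓ n : ℕ) : 0 ≤ cc ℓ n := by unfold cc; positivity

lemma cc_pos (m n : ℕ) : 0 < cc (m + 1) n := by rw [cc_fact]; positivity

lemma cc_le (m n : ℕ) : cc (m + 1) n ≤ 1 / (n.factorial : ℝ) := by
  rw [cc_fact]
  have h1 : ((m + n).factorial : ℝ) ≤ ((m + n + 1).factorial : ℝ) := by
    exact_mod_cast Nat.factorial_le (by omega)
  have h2 : (n.factorial : ℝ) * ((m + n + 1).factorial : ℝ)
      ≤ (n.factorial : ℝ) * (m.factorial : ℝ) * ((m + n + 1).factorial : ℝ) := by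
    have hm : (1 : ℝ) ≤ (m.factorial : ℝ) := Nat.one_le_cast.mpr m.factorial_pos
    have hp : (0:ℝ) < (n.factorial : ℝ) * ((m + n + 1).factorial : ℝ) := by positivity
    nlinarith [hp]
  calc ((m + n).factorial : ℝ) / ((n.factorial : ℝ) * (m.factorial : ℝ) * ((m + n + 1).factorial : ℝ))
      ≤ ((m + n + 1).factorial : ℝ) / ((n.factorial : ℝ) * ((m + n + 1).factorial : ℝ)) := by
        apply div_le_div₀ (by positivity) h1 (by positivity) h2
    _ = 1 / (n.factorial : ℝ) := by
        rw [div_eq_div_iff (by positivity) (by positivity)]; ring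

lemma summable_cc_norm (ℓ : ℕ) (hℓ : 1 ≤ ℓ) (t : ℝ) (ht : 0 ≤ t) :
    Summable fun n : ℕ => ‖cc ℓ n * t ^ n‖ := by
  obtain ⟨m, rfl⟩ : ∃ m, ℓ = m + 1 := ⟨ℓ - 1, by omega⟩
  refine Summable.of_nonneg_of_le (fun k => norm_nonneg _) (fun n => ?_)
    (Real.summable_pow_div_factorial t)
  rw [Real.norm_eq_abs, abs_of_nonneg (mul_nonneg (cc_nonneg _ _) (pow_nonneg ht n)),
    div_eq_mul_inv, mul_comm (t ^ n)]
  apply mul_le_mul_of_nonneg_right _ (pow_nonneg ht n)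
  rw [← one_div]
  exact cc_le m n

lemma summable_cc (ℓ : ℕ) (hℓ : 1 ≤ ℓ) (t : ℝ) (ht : 0 ≤ t) :
    Summable fun n : ℕ => cc ℓ n * t ^ n := (summable_cc_norm ℓ hℓ t ht).of_norm

lemma summable_exp_norm (y : ℝ) : Summable fun n : ℕ => ‖y ^ n / (n.factorial : ℝ)‖ := by
  simpa using summable_phi_norm 0 y

lemma key (ℓ : ℕ) (hℓ : 1 ≤ ℓ) (y : ℝ) :
    phiR ℓ (-y) * Real.exp y = ∑' n : ℕ, cc ℓ n * y ^ n := by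
  obtain ⟨m, rfl⟩ : ∃ m, ℓ = m + 1 := ⟨ℓ - 1, by omega⟩
  rw [phiR, exp_tsum,
    tsum_mul_tsum_eq_tsum_sum_range_of_summable_norm (summable_phi_norm (m + 1) (-y))
      (summable_exp_norm y)]
  apply tsum_congr
  intro n
  have hterm : ∀ k ∈ range (n + 1),
      ((-y) ^ k / (((m + 1 + k).factorial : ℝ))) * (y ^ (n - k) / ((n - k).factorial : ℝ))
        = ((-1 : ℝ) ^ k / (((m + 1 + k).factorial : ℝ) * ((n - k).factorial : ℝ))) * y ^ n := by
    intro k hk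
    have hk' : k ≤ n := by simpa [Nat.lt_succ_iff] using hk
    have hpow : (-y) ^ k * y ^ (n - k) = (-1 : ℝ) ^ k * y ^ n := by
      rw [neg_pow, mul_assoc, ← pow_add, show k + (n - k) = n by omega]
    rw [div_mul_div_comm, hpow]
    ring
  rw [Finset.sum_congr rfl hterm, ← Finset.sum_mul, coeff_eq]
  rw [cc, show m + 1 + n - 1 = m + n by omega, show m + 1 + n = m + n + 1 by omega]

lemma key2 (ℓ : ℕ) (hℓ : 1 ≤ ℓ) (y : ℝ) (hy : 0 ≤ y) :
    (∑' n : ℕ, cc ℓ n * y ^ n) * Real.exp y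
      = ∑' n : ℕ, ∑ k ∈ range (n + 1), (cc ℓ k * y ^ k) * (y ^ (n - k) / ((n - k).factorial : ℝ)) := by
  rw [exp_tsum]
  exact tsum_mul_tsum_eq_tsum_sum_range_of_summable_norm (summable_cc_norm ℓ hℓ y hy)
    (summable_exp_norm y)

lemma perk (ℓ : ℕ) (hℓ : 1 ≤ ℓ) (n k : ℕ) (hk : k ≤ n) :
    (n.choose k : ℝ) * cc ℓ n ≤ cc ℓ k / ((n - k).factorial : ℝ) := by
  obtain ⟨m, rfl⟩ : ∃ m, ℓ = m + 1 := ⟨ℓ - 1, by omega⟩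
  have chooseN := Nat.choose_mul_factorial_mul_factorial hk
  have chooseR : (n.choose k : ℝ) * (k.factorial : ℝ) * ((n - k).factorial : ℝ)
      = (n.factorial : ℝ) := by exact_mod_cast chooseN
  have natineq : (m + n).factorial * (m + k + 1).factorial
      ≤ (m + k).factorial * (m + n + 1).factorial := by
    rw [Nat.factorial_succ (m + k), Nat.factorial_succ (m + n)]
    calc (m + n).factorial * ((m + k + 1) * (m + k).factorial)
        = (m + k + 1) * ((m + n).factorial * (m + k).factorial) := by ring
      _ ≤ (m + n + 1) * ((m + n).factorial * (m + k).factorial) :=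
          Nat.mul_le_mul_right _ (by omega)
      _ = (m + k).factorial * ((m + n + 1) * (m + n).factorial) := by ring
  have natR : ((m + n).factorial : ℝ) * ((m + k + 1).factorial : ℝ)
      ≤ ((m + k).factorial : ℝ) * ((m + n + 1).factorial : ℝ) := by exact_mod_cast natineq
  rw [cc_fact, cc_fact, div_div, mul_div_assoc', div_le_div_iff₀ (by positivity) (by positivity)]
  calc (n.choose k : ℝ) * ((m + n).factorial : ℝ)
        * ((k.factorial : ℝ) * (m.factorial : ℝ) * ((m + k + 1).factorial : ℝ)
            * ((n - k).factorial : ℝ))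
      = ((n.choose k : ℝ) * (k.factorial : ℝ) * ((n - k).factorial : ℝ) * (m.factorial : ℝ))
          * (((m + n).factorial : ℝ) * ((m + k + 1).factorial : ℝ)) := by ring
    _ ≤ ((n.choose k : ℝ) * (k.factorial : ℝ) * ((n - k).factorial : ℝ) * (m.factorial : ℝ))
          * (((m + k).factorial : ℝ) * ((m + n + 1).factorial : ℝ)) :=
        mul_le_mul_of_nonneg_left natR (by positivity)
    _ = ((m + k).factorial : ℝ)
          * (((n.choose k : ℝ) * (k.factorial : ℝ) * ((n - k).factorial : ℝ)) * (m.factorial : ℝ)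
            * ((m + n + 1).factorial : ℝ)) := by ring
    _ = ((m + k).factorial : ℝ)
          * ((n.factorial : ℝ) * (m.factorial : ℝ) * ((m + n + 1).factorial : ℝ)) := by
        rw [chooseR]

lemma sum_ineq (ℓ : ℕ) (hℓ : 1 ≤ ℓ) (y : ℝ) (hy : 0 ≤ y) (n : ℕ) :
    cc ℓ n * (2 * y) ^ n
      ≤ ∑ k ∈ range (n + 1), (cc ℓ k * y ^ k) * (y ^ (n - k) / ((n - k).factorial : ℝ)) := by
  have hs : ∑ k ∈ range (n + 1), ((n.choose k : ℕ) : ℝ) = (2 : ℝ) ^ n := by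
    rw [← Nat.cast_sum, Nat.sum_range_choose]
    push_cast
    ring
  have h1 : cc ℓ n * (2 * y) ^ n
      = ∑ k ∈ range (n + 1), ((n.choose k : ℝ) * cc ℓ n) * y ^ n := by
    calc cc ℓ n * (2 * y) ^ n
        = (∑ k ∈ range (n + 1), ((n.choose k : ℕ) : ℝ)) * (cc ℓ n * y ^ n) := by
          rw [hs, mul_pow]; ring
      _ = ∑ k ∈ range (n + 1), ((n.choose k : ℝ) * cc ℓ n) * y ^ n := by
          rw [Finset.sum_mul]
          exact Finset.sum_congr rfl (fun k _ => by ring)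
  rw [h1]
  apply Finset.sum_le_sum
  intro k hk
  have hk' : k ≤ n := by simpa [Nat.lt_succ_iff] using hk
  have hyn : y ^ k * y ^ (n - k) = y ^ n := by
    rw [← pow_add, show k + (n - k) = n by omega]
  calc ((n.choose k : ℝ) * cc ℓ n) * y ^ n
      ≤ (cc ℓ k / ((n - k).factorial : ℝ)) * y ^ n :=
        mul_le_mul_of_nonneg_right (perk ℓ hℓ n k hk') (pow_nonneg hy n)
    _ = (cc ℓ k * y ^ k) * (y ^ (n - k) / ((n - k).factorial : ℝ)) := by
        rw [← hyn]; ring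

/-- For every integer `ℓ ≥ 1` and every real `z ≤ 0`, one has `0 < φ_ℓ(2z)` and
`φ_ℓ(2z) ≤ φ_ℓ(z)`; in particular `0 ≤ φ_ℓ(2z)/φ_ℓ(z) ≤ 1`. -/
theorem stmt11 (ℓ : ℕ) (hℓ : 1 ≤ ℓ) (z : ℝ) (hz : z ≤ 0) :
    0 < phiR ℓ (2 * z) ∧ phiR ℓ (2 * z) ≤ phiR ℓ z ∧
      0 ≤ phiR ℓ (2 * z) / phiR ℓ z ∧ phiR ℓ (2 * z) / phiR ℓ z ≤ 1 := by
  have hy : 0 ≤ -z := by linarith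
  have h2y : 0 ≤ 2 * -z := by linarith
  have pos : ∀ t : ℝ, 0 ≤ t → 0 < phiR ℓ (-t) := by
    intro t ht
    have hk := key ℓ hℓ t
    have hG : 0 < ∑' n : ℕ, cc ℓ n * t ^ n := by
      apply Summable.tsum_pos (summable_cc ℓ hℓ t ht)
        (fun n => mul_nonneg (cc_nonneg _ _) (pow_nonneg ht n)) 0
      obtain ⟨m, rfl⟩ : ∃ m, ℓ = m + 1 := ⟨ℓ - 1, by omega⟩
      simpa using cc_pos m 0
    nlinarith [Real.exp_pos t, hk]
  have mono : ∀ t : ℝ, 0 ≤ t → phiR ℓ (-(2 * t)) ≤ phiR ℓ (-t) := by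
    intro t ht
    have h2t : 0 ≤ 2 * t := by linarith
    have k1 := key ℓ hℓ t
    have k2 := key ℓ hℓ (2 * t)
    have k3 := key2 ℓ hℓ t ht
    have hle : (∑' n : ℕ, cc ℓ n * (2 * t) ^ n) ≤ (∑' n : ℕ, cc ℓ n * t ^ n) * Real.exp t := by
      rw [k3]
      exact Summable.tsum_le_tsum (fun n => sum_ineq ℓ hℓ t ht n) (summable_cc ℓ hℓ (2 * t) h2t)
        ((summable_norm_sum_mul_range_of_summable_norm (summable_cc_norm ℓ hℓ t ht)
          (summable_exp_norm t)).of_norm)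
    have hexp : Real.exp (2 * t) = Real.exp t * Real.exp t := by
      rw [← Real.exp_add]; ring_nf
    have hEE : (0 : ℝ) < Real.exp t * Real.exp t := by positivity
    have c1 : phiR ℓ (-(2 * t)) * (Real.exp t * Real.exp t)
        = ∑' n : ℕ, cc ℓ n * (2 * t) ^ n := by rw [← hexp]; exact k2
    have c2 : (∑' n : ℕ, cc ℓ n * t ^ n) * Real.exp t
        = phiR ℓ (-t) * (Real.exp t * Real.exp t) := by rw [← k1]; ring
    have : phiR ℓ (-(2 * t)) * (Real.exp t * Real.exp t)
        ≤ phiR ℓ (-t) * (Real.exp t * Real.exp t) := by linarith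
    exact le_of_mul_le_mul_right this hEE
  have hpos2 : 0 < phiR ℓ (2 * z) := by
    rw [show (2 : ℝ) * z = -(2 * -z) by ring]
    exact pos (2 * -z) h2y
  have hposz : 0 < phiR ℓ z := by
    have := pos (-z) hy
    rwa [neg_neg] at this
  have hmono : phiR ℓ (2 * z) ≤ phiR ℓ z := by
    have := mono (-z) hy
    rwa [show -(2 * -z) = 2 * z by ring, neg_neg] at this
  exact ⟨hpos2, hmono, div_nonneg hpos2.le hposz.le, (div_le_one hposz).mpr hmono⟩
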